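/- arXiv:1810.08763 — 2 statements merged into one kernel-verified Lean document; each statement's English description precedes it below -/
import Mathlib

section
/- Let κ < 𝔡 and for each α < κ let F_α be an infinite collection of pairwise disjoint finite subsets of ω and g_α : ⋃F_α → ω. Then there is f : ω → ω such that for each α < κ there are infinitely many X ∈ F_α with g_α(m) < f(m) for all m ∈ X. -/
/-- The dominating number `𝔡`. -/
noncomputable def dNum : Cardinal :=
  sInf {c | ∃ D : Set (ℕ → ℕ), Cardinal.mk ↥D = c ∧
    ∀ f : ℕ → ℕ, ∃ g ∈ D, {n | g n < f n}.Finite}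

/-- If `κ < 𝔡` and for each `α < κ`, `F α` is an infinite collection of pairwise
disjoint finite subsets of `ω` with `g α : ⋃ F α → ω`, then there is `f : ω → ω`
such that for each `α` infinitely many `X ∈ F α` satisfy `g α ↾ X < f ↾ X`. -/
theorem stmt13 (ι : Type) (hι : Cardinal.mk ι < dNum)
    (F : ι → Set (Set ℕ)) (g : ι → ℕ → ℕ)
    (hFinf : ∀ α, (F α).Infinite)
    (hFfin : ∀ α, ∀ X ∈ F α, X.Finite)
    (hFdisj : ∀ α, ∀ X ∈ F α, ∀ Y ∈ F α, X ≠ Y → X ∩ Y = ∅) :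
    ∃ f : ℕ → ℕ, ∀ α, {X | X ∈ F α ∧ ∀ m ∈ X, g α m < f m}.Infinite := by
  classical
  -- Step 1: for each α, n choose a nonempty X ∈ F α contained in [n, ∞).
  have hex : ∀ α (n : ℕ), ∃ X, X ∈ F α ∧ X.Nonempty ∧ ∀ m ∈ X, n ≤ m := by
    intro α n
    have hbad : {X | X ∈ F α ∧ ∃ m ∈ X, m < n}.Finite := by
      have hsub : {X | X ∈ F α ∧ ∃ m ∈ X, m < n} ⊆
          ⋃ m ∈ Set.Iio n, {X | X ∈ F α ∧ m ∈ X} := by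
        rintro X ⟨hX, m, hm, hmn⟩
        exact Set.mem_biUnion hmn ⟨hX, hm⟩
      refine Set.Finite.subset (Set.Finite.biUnion (Set.finite_Iio n) ?_) hsub
      intro m _
      apply Set.Subsingleton.finite
      rintro Y ⟨hY, hmY⟩ Z ⟨hZ, hmZ⟩
      by_contra hne
      have hdisj := hFdisj α Y hY Z hZ hne
      have : m ∈ Y ∩ Z := ⟨hmY, hmZ⟩
      rw [hdisj] at this
      exact this
    have hfin : ({X | X ∈ F α ∧ ∃ m ∈ X, m < n} ∪ {(∅ : Set ℕ)}).Finite :=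
      hbad.union (Set.finite_singleton _)
    obtain ⟨X, hXF, hXnot⟩ := ((hFinf α).diff hfin).nonempty
    refine ⟨X, hXF, ?_, ?_⟩
    · rw [Set.nonempty_iff_ne_empty]
      intro h
      exact hXnot (Or.inr (by simp [h]))
    · intro m hm
      by_contra hlt
      exact hXnot (Or.inl ⟨hXF, m, hm, Nat.lt_of_not_le hlt⟩)
  choose X hXF hXne hXge using hex
  -- Step 2: define h α n = max of g α over X α n.
  set h : ι → ℕ → ℕ := fun α n => (hFfin α (X α n) (hXF α n)).toFinset.sup (g α) with hhdef
  -- Step 3: the family h is not dominating.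
  have hnd : ∃ f : ℕ → ℕ, ∀ α, {n | h α n < f n}.Infinite := by
    by_contra hc
    push_neg at hc
    have hdom : dNum ≤ Cardinal.mk ↥(Set.range h) := by
      apply csInf_le'
      refine ⟨Set.range h, rfl, ?_⟩
      intro f
      obtain ⟨α, hα⟩ := hc f
      exact ⟨h α, ⟨α, rfl⟩, hα⟩
    exact absurd (lt_of_le_of_lt (hdom.trans Cardinal.mk_range_le) hι) (lt_irrefl _)
  obtain ⟨f, hf⟩ := hnd
  -- Step 4: monotonize f.
  refine ⟨fun n => (Finset.range (n + 1)).sup f, ?_⟩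
  intro α
  have hsub : (fun n => X α n) '' {n | h α n < f n} ⊆
      {Y | Y ∈ F α ∧ ∀ m ∈ Y, g α m < (Finset.range (m + 1)).sup f} := by
    rintro Y ⟨n, hn, rfl⟩
    refine ⟨hXF α n, ?_⟩
    intro m hm
    have h1 : g α m ≤ h α n :=
      Finset.le_sup ((hFfin α (X α n) (hXF α n)).mem_toFinset.mpr hm)
    have h2 : f n ≤ (Finset.range (m + 1)).sup f :=
      Finset.le_sup (Finset.mem_range.mpr (Nat.lt_succ_of_le (hXge α n m hm)))
    exact lt_of_lt_of_le (lt_of_le_of_lt h1 hn) h2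
  have himg : ((fun n => X α n) '' {n | h α n < f n}).Infinite := by
    by_contra hfin
    rw [Set.not_infinite] at hfin
    apply hf α
    have hsub2 : {n | h α n < f n} ⊆
        ⋃ Y ∈ (fun n => X α n) '' {n | h α n < f n}, {n | X α n = Y} := by
      intro n hn
      exact Set.mem_biUnion ⟨n, hn, rfl⟩ rfl
    refine Set.Finite.subset (hfin.biUnion ?_) hsub2
    rintro Y ⟨n0, _, rfl⟩
    obtain ⟨m, hm⟩ := hXne α n0
    apply Set.Finite.subset (Set.finite_Iic m)
    intro n hn
    have : m ∈ X α n := by rw [Set.mem_setOf_eq] at hn; rw [hn]; exact hm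
    exact hXge α n m this
  exact himg.mono hsub
end

section
/- Assuming CH, there is a MAD family on ω^{<ω} containing all branch-sets {f↾n : n∈ω} for f ∈ ω^ω which cannot be extended to an F_σ ideal (is Laflamme) but is not +-Ramsey. -/
variable {α : Type}

/-- An almost disjoint family on a countable set `α`. -/
def IsADF (𝒜 : Set (Set α)) : Prop :=
  (∀ A ∈ 𝒜, A.Infinite) ∧ ∀ A ∈ 𝒜, ∀ B ∈ 𝒜, A ≠ B → (A ∩ B).Finite

/-- A maximal almost disjoint family on `α`. -/
def IsMAD (𝒜 : Set (Set α)) : Prop :=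
  IsADF 𝒜 ∧ ∀ X : Set α, X.Infinite → ∃ A ∈ 𝒜, (X ∩ A).Infinite

/-- `X ∈ I(𝒜)`: the ideal generated by `𝒜` together with the finite sets. -/
def InIdeal (𝒜 : Set (Set α)) (X : Set α) : Prop :=
  ∃ F : Finset (Set α), ↑F ⊆ 𝒜 ∧ (X \ ⋃ A ∈ F, A).Finite

/-- `X` is `I(𝒜)`-positive. -/
def Positive (𝒜 : Set (Set α)) (X : Set α) : Prop := ¬ InIdeal 𝒜 X

/-- A tree of finite sequences from `α`, closed under initial segments. -/
def IsTree (T : Set (List α)) : Prop := ∀ s ∈ T, ∀ t, t <+: s → t ∈ T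

/-- The successor set `suc_T(s)`. -/
def sucT (T : Set (List α)) (s : List α) : Set α := {a | s ++ [a] ∈ T}

/-- `𝒜` is `+`-Ramsey: every tree all of whose successor sets are `I(𝒜)`-positive
has a branch whose range is `I(𝒜)`-positive. -/
def PlusRamsey (𝒜 : Set (Set α)) : Prop :=
  ∀ T : Set (List α), [] ∈ T → IsTree T → (∀ s ∈ T, Positive 𝒜 (sucT T s)) →
    ∃ f : ℕ → α, (∀ n, (List.range n).map f ∈ T) ∧ Positive 𝒜 (Set.range f)

/-- The branch-set `f̂ = {f↾n : n ∈ ω} ⊆ ω^{<ω}` of `f ∈ ω^ω`. -/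
def branchSet (f : ℕ → ℕ) : Set (List ℕ) := {l | ∃ n, l = (List.range n).map f}

/-- A lower semicontinuous submeasure on `ω^{<ω}`. -/
def IsLSC (φ : Set (List ℕ) → ℕ∞) : Prop :=
  φ ∅ = 0 ∧
  (∀ A B, A ⊆ B → φ A ≤ φ B) ∧
  (∀ A B, φ (A ∪ B) ≤ φ A + φ B) ∧
  (∀ A, φ A = ⨆ (F : Finset (List ℕ)) (_ : ↑F ⊆ A), φ ↑F)

/-- `𝒜` is Laflamme: `I(𝒜)` cannot be extended to a proper `F_σ` ideal, i.e. there is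
no lower semicontinuous submeasure `φ` which is finite on all singletons and all
members of `𝒜` but infinite on `ω^{<ω}`. -/
def Laflamme (𝒜 : Set (Set (List ℕ))) : Prop :=
  ¬ ∃ φ : Set (List ℕ) → ℕ∞, IsLSC φ ∧ φ Set.univ = ⊤ ∧
      (∀ s : List ℕ, φ {s} ≠ ⊤) ∧ ∀ A ∈ 𝒜, φ A ≠ ⊤

namespace Aux

lemma map_range_injective (f : ℕ → ℕ) : Function.Injective (fun n => (List.range n).map f) := by
  intro a b h
  have := congrArg List.length h
  simpa using this

lemma prefix_map_range {f : ℕ → ℕ} {m n : ℕ} (h : m ≤ n) :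
    (List.range m).map f <+: (List.range n).map f := by
  have h1 : ((List.range n).map f).take m = (List.range m).map f := by
    rw [← List.map_take, List.take_range, Nat.min_eq_left h]
  rw [← h1]
  exact List.take_prefix _ _

lemma eq_map_range_of_prefix {f : ℕ → ℕ} {t : List ℕ} {n : ℕ}
    (h : t <+: (List.range n).map f) : t = (List.range t.length).map f := by
  have hlen : t.length ≤ n := by simpa using h.length_le
  conv_lhs => rw [List.prefix_iff_eq_take.mp h]
  rw [← List.map_take, List.take_range, Nat.min_eq_left hlen]

lemma branchSet_infinite (f : ℕ → ℕ) : (branchSet f).Infinite :=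
  Set.infinite_of_injective_forall_mem (map_range_injective f) (fun n => ⟨n, rfl⟩)

lemma eq_entry {f g : ℕ → ℕ} {n k : ℕ} (hk : k < n)
    (hm : (List.range n).map f = (List.range n).map g) : f k = g k := by
  have e : ((List.range n).map f)[k]'(by simp [hk]) = ((List.range n).map g)[k]'(by simp [hk]) := by
    simp_rw [hm]
  simpa using e

lemma branchSet_inter_finite {f g : ℕ → ℕ} (h : f ≠ g) :
    (branchSet f ∩ branchSet g).Finite := by
  obtain ⟨k, hk⟩ := Function.ne_iff.mp h
  apply Set.Finite.subset (Set.finite_range (fun n : Fin (k+1) => (List.range n.1).map f))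
  rintro l ⟨⟨n, rfl⟩, ⟨m, hm⟩⟩
  have hnm : n = m := by simpa using congrArg List.length hm
  subst hnm
  have hnk : n ≤ k := by
    by_contra hgt
    exact hk (eq_entry (by omega) hm)
  exact ⟨⟨n, by omega⟩, rfl⟩

lemma branchSet_injective : Function.Injective branchSet := by
  intro f g h
  funext k
  have : (List.range (k+1)).map f ∈ branchSet g := h ▸ ⟨k+1, rfl⟩
  obtain ⟨m, hm⟩ := this
  have hm' : k + 1 = m := by simpa using congrArg List.length hm
  subst hm'
  exact eq_entry (by omega) hm

/-- limit of a strictly increasing prefix chain -/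
lemma limit_lemma {s : ℕ → List ℕ} (hmono : ∀ n, s n <+: s (n+1) ∧ s n ≠ s (n+1)) :
    ∃ g : ℕ → ℕ, ∀ i, s i = (List.range (s i).length).map g := by
  have hpre : ∀ i j, i ≤ j → s i <+: s j := by
    intro i j hij
    induction j with
    | zero => simp_all
    | succ j ih =>
      rcases Nat.lt_or_ge i (j+1) with h | h
      · exact (ih (by omega)).trans (hmono j).1
      · have : i = j + 1 := by omega
        subst this; exact List.prefix_refl _
  have hlen : ∀ n, n ≤ (s n).length := by
    intro n
    induction n with
    | zero => omega
    | succ n ih =>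
      have h1 := (hmono n).1.length_le
      have h2 : (s n).length ≠ (s (n+1)).length := fun he => (hmono n).2 ((hmono n).1.eq_of_length he)
      omega
  have hklt : ∀ k : ℕ, k < (s (k+1)).length := fun k => by have := hlen (k+1); omega
  refine ⟨fun k => (s (k+1))[k]'(hklt k), ?_⟩
  intro i
  apply List.ext_getElem (by simp)
  intro k hk1 hk2
  have hkr : ((List.range (s i).length).map (fun k => (s (k+1))[k]'(hklt k)))[k]'hk2
      = (s (k+1))[k]'(hklt k) := by simp
  rw [hkr]
  rcases Nat.le_total i (k+1) with h | h
  · exact (hpre _ _ h).getElem hk1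
  · exact ((hpre _ _ h).getElem (hklt k)).symm


lemma enat_add_ne_top {a b : ℕ∞} (ha : a ≠ ⊤) (hb : b ≠ ⊤) : a + b ≠ ⊤ :=
  WithTop.add_ne_top.mpr ⟨ha, hb⟩

lemma enat_le_cancel {a b c : ℕ∞} (hc : c ≠ ⊤) (h : a + c ≤ b + c) : a ≤ b := by
  by_contra hab
  push_neg at hab
  exact absurd h (not_le.mpr ((ENat.add_lt_add_iff_right hc).mpr hab))

lemma enat_eq_top_of_forall {x : ℕ∞} (h : ∀ n : ℕ, (n : ℕ∞) ≤ x) : x = ⊤ := by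
  by_contra hx
  lift x to ℕ using hx
  have := h (x + 1)
  rw [Nat.cast_le] at this
  omega

variable {φ : Set (List ℕ) → ℕ∞}

lemma phi_finite_ne_top (hφ : IsLSC φ) (hsing : ∀ s : List ℕ, φ {s} ≠ ⊤)
    {A : Set (List ℕ)} (hA : A.Finite) : φ A ≠ ⊤ := by
  classical
  have key : ∀ F : Finset (List ℕ), φ ↑F ≠ ⊤ := by
    intro F
    induction F using Finset.induction with
    | empty => simp [hφ.1]
    | @insert a F hx ih =>
      have h1 : (↑(insert a F) : Set (List ℕ)) = {a} ∪ ↑F := by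
        rw [Finset.coe_insert, Set.insert_eq]
      rw [h1]
      intro htop
      exact enat_add_ne_top (hsing a) ih (top_le_iff.mp (htop ▸ hφ.2.2.1 {a} ↑F))
  have := key hA.toFinset
  rwa [Set.Finite.coe_toFinset] at this

lemma phi_union_ne_top (hφ : IsLSC φ) {A B : Set (List ℕ)} (hA : φ A ≠ ⊤) (hB : φ B ≠ ⊤) :
    φ (A ∪ B) ≠ ⊤ :=
  fun htop => enat_add_ne_top hA hB (top_le_iff.mp (htop ▸ hφ.2.2.1 A B))

lemma phi_biUnion_ne_top (hφ : IsLSC φ) {ι : Type} (S : Finset ι) (g : ι → Set (List ℕ))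
    (h : ∀ i ∈ S, φ (g i) ≠ ⊤) : φ (⋃ i ∈ S, g i) ≠ ⊤ := by
  classical
  induction S using Finset.induction with
  | empty => simp [hφ.1]
  | @insert a S hx ih =>
    rw [Finset.set_biUnion_insert]
    exact phi_union_ne_top hφ (h a (by simp)) (ih fun i hi => h i (by simp [hi]))

lemma shrink (hφ : IsLSC φ) {F : Finset (List ℕ)} {Z : Set (List ℕ)} (hZ : φ Z ≠ ⊤) {k : ℕ}
    (h : (k : ℕ∞) + φ Z ≤ φ ↑F) :
    ∃ F' : Finset (List ℕ), ↑F' ⊆ (↑F : Set (List ℕ)) \ Z ∧ (k : ℕ∞) ≤ φ ↑F' := by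
  classical
  refine ⟨F.filter (· ∉ Z), ?_, ?_⟩
  · intro t ht
    simp only [Finset.coe_filter, Set.mem_setOf_eq] at ht
    exact ⟨ht.1, ht.2⟩
  · have hsub : (↑F : Set (List ℕ)) ⊆ ↑(F.filter (· ∉ Z)) ∪ Z := by
      intro t ht
      by_cases htZ : t ∈ Z
      · exact Or.inr htZ
      · refine Or.inl (Finset.mem_coe.mpr (Finset.mem_filter.mpr ⟨Finset.mem_coe.mp ht, by simpa using htZ⟩))
    have h2 := (hφ.2.1 _ _ hsub).trans (hφ.2.2.1 _ _)
    exact enat_le_cancel hZ (h.trans h2)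

lemma getBig (hφ : IsLSC φ) {A Z : Set (List ℕ)} (hA : φ A = ⊤) (hZ : φ Z ≠ ⊤) (k : ℕ) :
    ∃ F : Finset (List ℕ), ↑F ⊆ A \ Z ∧ (k : ℕ∞) ≤ φ ↑F := by
  have hb : (k : ℕ∞) + φ Z < ⊤ := lt_top_iff_ne_top.mpr (enat_add_ne_top (by simp) hZ)
  have hsup : (⨆ (F : Finset (List ℕ)) (_ : ↑F ⊆ A), φ ↑F) = ⊤ := (hφ.2.2.2 A) ▸ hA
  rw [← hsup] at hb
  obtain ⟨F, hF⟩ := lt_iSup_iff.mp hb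
  obtain ⟨hFA, hFb⟩ := lt_iSup_iff.mp hF
  obtain ⟨F', h1, h2⟩ := shrink hφ hZ hFb.le
  exact ⟨F', fun t ht => ⟨hFA (h1 ht).1, (h1 ht).2⟩, h2⟩


/-! ### The generic construction -/

lemma build {φ : Set (List ℕ) → ℕ∞} (hφ : IsLSC φ) (hsing : ∀ s : List ℕ, φ {s} ≠ ⊤)
    (D : ℕ → Set (List ℕ))
    (Inv : Finset (List ℕ) → Prop) (hInv0 : Inv ∅)
    (hstep : ∀ (k : ℕ) (G : Finset (List ℕ)), Inv G → ∃ F : Finset (List ℕ),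
      Inv (G ∪ F) ∧ (k : ℕ∞) ≤ φ ↑F ∧ (∀ i ≤ k, ∀ t ∈ F, t ∉ D i) ∧
      (∀ t ∈ G, ∀ s ∈ F, ¬(t <+: s ∧ t ≠ s))) :
    ∃ Y : Set (List ℕ), Y.Infinite ∧ φ Y = ⊤ ∧ (∀ g, (Y ∩ branchSet g).Finite) ∧
      ∀ i, (Y ∩ D i).Finite := by
  classical
  let σ : ℕ → {G : Finset (List ℕ) // Inv G} := fun n =>
    Nat.rec ⟨∅, hInv0⟩
      (fun k p => ⟨p.1 ∪ (hstep k p.1 p.2).choose, (hstep k p.1 p.2).choose_spec.1⟩) n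
  let G : ℕ → Finset (List ℕ) := fun n => (σ n).1
  let F : ℕ → Finset (List ℕ) := fun k => (hstep k (σ k).1 (σ k).2).choose
  have hG0 : G 0 = ∅ := rfl
  have hGsucc : ∀ k, G (k + 1) = G k ∪ F k := fun k => rfl
  have spec : ∀ k : ℕ, (k : ℕ∞) ≤ φ ↑(F k) ∧ (∀ i ≤ k, ∀ t ∈ F k, t ∉ D i) ∧
      (∀ t ∈ G k, ∀ s ∈ F k, ¬(t <+: s ∧ t ≠ s)) :=
    fun k => (hstep k (σ k).1 (σ k).2).choose_spec.2
  have hmono : ∀ k m, k ≤ m → G k ⊆ G m := by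
    intro k m hkm
    induction m with
    | zero => have : k = 0 := by omega
              subst this; exact subset_rfl
    | succ m ih =>
      rcases Nat.lt_or_ge k (m+1) with h | h
      · refine (ih (by omega)).trans ?_
        rw [hGsucc]; exact Finset.subset_union_left
      · have : k = m + 1 := by omega
        subst this; exact subset_rfl
  have hFG : ∀ k, F k ⊆ G (k + 1) := by
    intro k; rw [hGsucc]; exact Finset.subset_union_right
  set Y : Set (List ℕ) := {t | ∃ k, t ∈ G k} with hY
  have hGY : ∀ k, (↑(G k) : Set (List ℕ)) ⊆ Y := fun k t ht => ⟨k, ht⟩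
  -- least entry
  have hleast : ∀ t ∈ Y, ∃ k, t ∈ F k ∧ ∀ m, m ≤ k → t ∉ G m := by
    intro t ht
    obtain ⟨k0, hk0⟩ := ht
    have hex : ∃ k, t ∈ G k := ⟨k0, hk0⟩
    let k := Nat.find hex
    have hkmem : t ∈ G k := Nat.find_spec hex
    have hklt : ∀ m, m < k → t ∉ G m := fun m hm => Nat.find_min hex hm
    have hkpos : k ≠ 0 := by
      intro h0
      rw [h0] at hkmem
      simp [hG0] at hkmem
    obtain ⟨j, hj⟩ : ∃ j, k = j + 1 := ⟨k - 1, by omega⟩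
    rw [hj, hGsucc] at hkmem
    rcases Finset.mem_union.mp hkmem with h | h
    · exact absurd h (hklt j (by omega))
    · exact ⟨j, h, fun m hm => hklt m (by omega)⟩
  have hφY : φ Y = ⊤ := by
    apply enat_eq_top_of_forall
    intro n
    exact (spec n).1.trans (hφ.2.1 _ _ (fun t ht => hGY (n+1) (hFG n (Finset.mem_coe.mp ht))))
  have hYinf : Y.Infinite := fun hfin => phi_finite_ne_top hφ hsing hfin hφY
  refine ⟨Y, hYinf, hφY, ?_, ?_⟩
  · -- branch sets
    intro g
    by_contra hinf
    replace hinf : (Y ∩ branchSet g).Infinite := hinf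
    obtain ⟨t, htY, htg⟩ := hinf.nonempty
    obtain ⟨j, htj⟩ := htY
    have hbig : (↑(G j) ∪ {u ∈ branchSet g | u.length ≤ t.length} : Set (List ℕ)).Finite := by
      apply Set.Finite.union (G j).finite_toSet
      apply Set.Finite.subset (Set.finite_range (fun m : Fin (t.length + 1) => (List.range m.1).map g))
      rintro u ⟨⟨n, rfl⟩, hlen⟩
      refine ⟨⟨n, ?_⟩, rfl⟩
      simpa using Nat.lt_succ_of_le (by simpa using hlen)
    obtain ⟨s, hsY, hs⟩ := (hinf.diff hbig).nonempty
    obtain ⟨hsYmem, hsg⟩ := hsY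
    have hsGj : s ∉ (↑(G j) : Set (List ℕ)) := fun h => hs (Or.inl h)
    have hslen : t.length < s.length := by
      by_contra hle
      exact hs (Or.inr ⟨hsg, by omega⟩)
    obtain ⟨k, hsF, hsnot⟩ := hleast s hsYmem
    have hjk : j ≤ k := by
      by_contra hlt
      push_neg at hlt
      exact hsGj (Finset.mem_coe.mpr (hmono (k+1) j (by omega) (hFG k hsF)))
    have htk : t ∈ G k := hmono j k hjk htj
    obtain ⟨n, rfl⟩ := htg
    obtain ⟨m, rfl⟩ := hsg
    simp only [List.length_map, List.length_range] at hslen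
    have hnm : n ≤ m := by omega
    exact (spec k).2.2 _ htk _ hsF
      ⟨prefix_map_range hnm, fun he => by
        have hlen2 := congrArg List.length he
        simp only [List.length_map, List.length_range] at hlen2
        omega⟩
  · -- D i
    intro i
    apply Set.Finite.subset (G (i+1)).finite_toSet
    rintro t ⟨htY, htD⟩
    obtain ⟨k, hkF, _⟩ := hleast t htY
    rcases Nat.lt_or_ge k (i+1) with h | h
    · exact hmono (k+1) (i+1) (by omega) (hFG k hkF)
    · exact absurd htD ((spec k).2.1 i (by omega) t hkF)

/-! ### Extension cones and the boundary lemma -/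

def extSet (s : List ℕ) : Set (List ℕ) := {t | s <+: t}

lemma extSet_anti {s t : List ℕ} (h : s <+: t) : extSet t ⊆ extSet s :=
  fun _ hu => h.trans hu

lemma chain_length {s : ℕ → List ℕ} (hmono : ∀ n, s n <+: s (n+1) ∧ s n ≠ s (n+1)) :
    ∀ n, n ≤ (s n).length := by
  intro n
  induction n with
  | zero => omega
  | succ n ih =>
    have h1 := (hmono n).1.length_le
    have h2 : (s n).length ≠ (s (n+1)).length :=
      fun he => (hmono n).2 ((hmono n).1.eq_of_length he)
    omega

variable {φ : Set (List ℕ) → ℕ∞}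

lemma boundary (hφ : IsLSC φ) (hsing : ∀ s : List ℕ, φ {s} ≠ ⊤)
    (hnb : ¬∃ f : ℕ → ℕ, ∀ n, φ (extSet ((List.range n).map f)) = ⊤) :
    ∀ s : List ℕ, φ (extSet s) = ⊤ → ∀ k : ℕ, ∃ F : Finset (List ℕ),
      ↑F ⊆ extSet s ∧ (∀ t ∈ F, φ (extSet t) ≠ ⊤) ∧ (k : ℕ∞) ≤ φ ↑F := by
  set r : List ℕ → List ℕ → Prop :=
    fun t s => s <+: t ∧ s ≠ t ∧ φ (extSet t) = ⊤ with hr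
  haveI : IsIrrefl (List ℕ) r := ⟨fun a h => h.2.1 rfl⟩
  haveI : IsTrans (List ℕ) r := by
    refine ⟨fun a b c hab hbc => ⟨hbc.1.trans hab.1, ?_, hab.2.2⟩⟩
    intro he
    have h1 : c.length < b.length := by
      have := hbc.1.length_le
      rcases Nat.lt_or_ge c.length b.length with h | h
      · exact h
      · exact absurd (hbc.1.eq_of_length (by omega)) hbc.2.1
    have h2 : b.length ≤ a.length := hab.1.length_le
    have := congrArg List.length he
    omega
  haveI : IsStrictOrder (List ℕ) r := ⟨⟩
  have hwf : WellFounded r := by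
    rw [RelEmbedding.wellFounded_iff_isEmpty]
    by_contra h
    rw [not_isEmpty_iff] at h
    obtain ⟨e⟩ := h
    set x : ℕ → List ℕ := fun n => e n with hx'
    have hx : ∀ n, r (x (n+1)) (x n) := fun n => e.map_rel_iff.mpr (by omega)
    have hmono : ∀ n, x n <+: x (n+1) ∧ x n ≠ x (n+1) := fun n => ⟨(hx n).1, (hx n).2.1⟩
    obtain ⟨g, hg⟩ := limit_lemma hmono
    have hlen := chain_length hmono
    refine hnb ⟨g, fun n => ?_⟩
    have h1 : (List.range n).map g <+: x (n+1) := by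
      rw [hg (n+1)]
      exact prefix_map_range (le_trans (by omega) (hlen (n+1)))
    have h2 : extSet (x (n+1)) ⊆ extSet ((List.range n).map g) := extSet_anti h1
    have h3 : φ (extSet (x (n+1))) = ⊤ := (hx n).2.2
    exact top_le_iff.mp (h3 ▸ hφ.2.1 _ _ h2)
  intro s
  refine hwf.induction (C := fun s => φ (extSet s) = ⊤ → ∀ k : ℕ, ∃ F : Finset (List ℕ),
    ↑F ⊆ extSet s ∧ (∀ t ∈ F, φ (extSet t) ≠ ⊤) ∧ (k : ℕ∞) ≤ φ ↑F) s ?_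
  intro s ih hs k
  by_cases hex : ∃ t, s <+: t ∧ s ≠ t ∧ φ (extSet t) = ⊤
  · obtain ⟨t, h1, h2, h3⟩ := hex
    obtain ⟨F, hA, hB, hC⟩ := ih t ⟨h1, h2, h3⟩ h3 k
    exact ⟨F, hA.trans (extSet_anti h1), hB, hC⟩
  · obtain ⟨F, hF1, hF2⟩ := getBig hφ hs (hsing s) k
    refine ⟨F, fun t ht => (hF1 ht).1, ?_, hF2⟩
    intro t ht htop'
    have h5 := hF1 (Finset.mem_coe.mpr ht)
    exact hex ⟨t, h5.1, fun he => h5.2 (Set.mem_singleton_iff.mpr he.symm), htop'⟩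

/-! ### The main lemma -/

lemma mainLemma (hφ : IsLSC φ) (htop : φ Set.univ = ⊤) (hsing : ∀ s : List ℕ, φ {s} ≠ ⊤)
    (hbr : ∀ f : ℕ → ℕ, φ (branchSet f) ≠ ⊤)
    (𝒟 : Set (Set (List ℕ))) (hc : 𝒟.Countable) (hD : ∀ A ∈ 𝒟, φ A ≠ ⊤) :
    ∃ Y : Set (List ℕ), Y.Infinite ∧ φ Y = ⊤ ∧ (∀ g, (Y ∩ branchSet g).Finite) ∧
      ∀ A ∈ 𝒟, (Y ∩ A).Finite := by
  classical
  obtain ⟨D, hDeq⟩ := (hc.insert ∅).exists_eq_range (Set.insert_nonempty _ _)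
  have hDmem : ∀ i, D i = ∅ ∨ D i ∈ 𝒟 := by
    intro i
    have : D i ∈ insert ∅ 𝒟 := hDeq ▸ Set.mem_range_self i
    simpa using this
  have hDne : ∀ i, φ (D i) ≠ ⊤ := by
    intro i
    rcases hDmem i with h | h
    · rw [h, hφ.1]; simp
    · exact hD _ h
  have hcov : ∀ A ∈ 𝒟, ∃ i, D i = A := by
    intro A hA
    have : A ∈ Set.range D := hDeq ▸ Set.mem_insert_of_mem _ hA
    obtain ⟨i, hi⟩ := this
    exact ⟨i, hi⟩
  have key : ∃ Y : Set (List ℕ), Y.Infinite ∧ φ Y = ⊤ ∧ (∀ g, (Y ∩ branchSet g).Finite) ∧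
      ∀ i, (Y ∩ D i).Finite := by
    by_cases hbranch : ∃ f : ℕ → ℕ, ∀ n, φ (extSet ((List.range n).map f)) = ⊤
    · -- Case A : there is a branch all of whose cones are big
      obtain ⟨f, hf⟩ := hbranch
      apply build hφ hsing D (fun G => ∀ t ∈ G, t ∉ branchSet f) (by simp)
      intro k G hG
      set n := (G.sup List.length) + 1 with hn
      have hZ : φ (branchSet f ∪ ⋃ i ∈ Finset.range (k+1), D i) ≠ ⊤ :=
        phi_union_ne_top hφ (hbr f) (phi_biUnion_ne_top hφ _ _ (fun i _ => hDne i))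
      obtain ⟨F, hF1, hF2⟩ := getBig hφ (hf n) hZ k
      refine ⟨F, ?_, hF2, ?_, ?_⟩
      · intro t ht
        rcases Finset.mem_union.mp ht with h | h
        · exact hG t h
        · exact fun hbf => (hF1 (Finset.mem_coe.mpr h)).2 (Or.inl hbf)
      · intro i hi t ht htD
        exact (hF1 (Finset.mem_coe.mpr ht)).2
          (Or.inr (Set.mem_biUnion (Finset.mem_range.mpr (by omega)) htD))
      · rintro t htG s' hsF ⟨hpre, hne⟩
        have hsn : (List.range n).map f <+: s' := (hF1 (Finset.mem_coe.mpr hsF)).1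
        have htn : t.length < n := by
          have := Finset.le_sup (f := List.length) htG
          omega
        rcases List.prefix_or_prefix_of_prefix hpre hsn with h | h
        · exact hG t htG ⟨t.length, eq_map_range_of_prefix h⟩
        · have := h.length_le
          simp only [List.length_map, List.length_range] at this
          omega
    · -- Case B : the big cones form a well-founded tree
      have hbd := boundary hφ hsing hbranch
      have hext0 : φ (extSet []) = ⊤ := by
        have he : extSet ([] : List ℕ) = Set.univ :=
          Set.eq_univ_of_forall (fun t => List.nil_prefix)
        rw [he]; exact htop
      apply build hφ hsing D (fun G => ∀ t ∈ G, φ (extSet t) ≠ ⊤) (by simp)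
      intro k G hG
      set Z := (⋃ i ∈ Finset.range (k+1), D i) ∪ ⋃ t ∈ G, extSet t with hZdef
      have hZ : φ Z ≠ ⊤ :=
        phi_union_ne_top hφ (phi_biUnion_ne_top hφ _ _ (fun i _ => hDne i))
          (phi_biUnion_ne_top hφ G extSet hG)
      obtain ⟨F0, hF0sub, hF0W, hF0big⟩ := hbd [] hext0 (k + (φ Z).toNat)
      have hge : (k : ℕ∞) + φ Z ≤ φ ↑F0 := by
        have : ((k + (φ Z).toNat : ℕ) : ℕ∞) = (k : ℕ∞) + φ Z := by
          push_cast
          rw [ENat.coe_toNat hZ]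
        rw [← this]
        exact hF0big
      obtain ⟨F, hFsub, hFbig⟩ := shrink hφ hZ hge
      refine ⟨F, ?_, hFbig, ?_, ?_⟩
      · intro t ht
        rcases Finset.mem_union.mp ht with h | h
        · exact hG t h
        · exact hF0W t (Finset.mem_coe.mp ((hFsub (Finset.mem_coe.mpr h)).1))
      · intro i hi t ht htD
        exact (hFsub (Finset.mem_coe.mpr ht)).2
          (Or.inl (Set.mem_biUnion (Finset.mem_range.mpr (by omega)) htD))
      · rintro t htG s' hsF ⟨hpre, hne⟩
        exact (hFsub (Finset.mem_coe.mpr hsF)).2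
          (Or.inr (Set.mem_biUnion htG hpre))
  obtain ⟨Y, h1, h2, h3, h4⟩ := key
  refine ⟨Y, h1, h2, h3, fun A hA => ?_⟩
  obtain ⟨i, rfl⟩ := hcov A hA
  exact h4 i

open Cardinal in
lemma two_power_aleph0_le : Cardinal.aleph0 ≤ 2 ^ Cardinal.aleph0 := (Cardinal.cantor _).le

def Code : Type := (Finset (List ℕ) → ℕ∞) ⊕ (Set (List ℕ))

open Cardinal in
lemma mk_code : #Code = 2 ^ Cardinal.aleph0 := by
  have h1 : #(Finset (List ℕ) → ℕ∞) = 2 ^ Cardinal.aleph0 := by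
    rw [Cardinal.mk_arrow, Cardinal.lift_id, Cardinal.lift_id,
      Cardinal.mk_eq_aleph0 (Finset (List ℕ)), Cardinal.mk_eq_aleph0 ℕ∞,
      Cardinal.power_self_eq le_rfl]
  have h2 : #(Set (List ℕ)) = 2 ^ Cardinal.aleph0 := by
    rw [Cardinal.mk_set, Cardinal.mk_eq_aleph0 (List ℕ)]
  have h3 : #Code = #(Finset (List ℕ) → ℕ∞) + #(Set (List ℕ)) := by
    rw [show Code = ((Finset (List ℕ) → ℕ∞) ⊕ (Set (List ℕ))) from rfl, Cardinal.mk_sum,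
      Cardinal.lift_id, Cardinal.lift_id]
  rw [h3, h1, h2, Cardinal.add_eq_self two_power_aleph0_le]

abbrev OType : Type := (Cardinal.aleph 1).ord.ToType

open Cardinal in
lemma countable_Iio (x : OType) : {y : OType | y < x}.Countable := by
  have h1 : #(Set.Iio x) < Cardinal.aleph 1 :=
    Cardinal.mk_Iio_ord_toType (c := Cardinal.aleph 1) x
  exact (Cardinal.countable_iff_lt_aleph_one _).mpr h1

open Cardinal in
lemma mk_otype : #OType = Cardinal.aleph 1 := by
  rw [Cardinal.mk_toType, Cardinal.card_ord]

open Cardinal in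
lemma exists_equiv (hCH : Cardinal.continuum.{0} = Cardinal.aleph.{0} 1) : Nonempty (Code ≃ OType) :=
  Cardinal.eq.mp (by rw [mk_code, mk_otype]; exact Cardinal.two_power_aleph0.trans hCH)

noncomputable def defaultSet : Set (List ℕ) := branchSet (fun _ => 0)

open Classical in
noncomputable def pickPhi (φ : Set (List ℕ) → ℕ∞) (𝒟 : Set (Set (List ℕ))) : Set (List ℕ) :=
  if h : IsLSC φ ∧ φ Set.univ = ⊤ ∧ (∀ s : List ℕ, φ {s} ≠ ⊤) ∧
      (∀ f : ℕ → ℕ, φ (branchSet f) ≠ ⊤) ∧ 𝒟.Countable ∧ (∀ A ∈ 𝒟, φ A ≠ ⊤)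
  then (mainLemma h.1 h.2.1 h.2.2.1 h.2.2.2.1 𝒟 h.2.2.2.2.1 h.2.2.2.2.2).choose
  else defaultSet

open Classical in
lemma pickPhi_spec {φ : Set (List ℕ) → ℕ∞} {𝒟 : Set (Set (List ℕ))}
    (h : IsLSC φ ∧ φ Set.univ = ⊤ ∧ (∀ s : List ℕ, φ {s} ≠ ⊤) ∧
      (∀ f : ℕ → ℕ, φ (branchSet f) ≠ ⊤) ∧ 𝒟.Countable ∧ (∀ A ∈ 𝒟, φ A ≠ ⊤)) :
    (pickPhi φ 𝒟).Infinite ∧ φ (pickPhi φ 𝒟) = ⊤ ∧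
      (∀ g, (pickPhi φ 𝒟 ∩ branchSet g).Finite) ∧ ∀ A ∈ 𝒟, (pickPhi φ 𝒟 ∩ A).Finite := by
  rw [pickPhi, dif_pos h]
  exact (mainLemma h.1 h.2.1 h.2.2.1 h.2.2.2.1 𝒟 h.2.2.2.2.1 h.2.2.2.2.2).choose_spec

def priorSets (x : OType) (rec : ∀ y : OType, y < x → Set (List ℕ)) : Set (Set (List ℕ)) :=
  {A | ∃ y, ∃ h : y < x, A = rec y h}

lemma priorSets_countable (x : OType) (rec : ∀ y : OType, y < x → Set (List ℕ)) :
    (priorSets x rec).Countable := by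
  haveI : Countable {y : OType // y < x} := (countable_Iio x).to_subtype
  have : priorSets x rec = Set.range (fun p : {y : OType // y < x} => rec p.1 p.2) := by
    ext A
    constructor
    · rintro ⟨y, h, rfl⟩; exact ⟨⟨y, h⟩, rfl⟩
    · rintro ⟨⟨y, h⟩, rfl⟩; exact ⟨y, h, rfl⟩
  rw [this]
  exact Set.countable_range _

open Classical in
noncomputable def step (e : Code ≃ OType) (x : OType)
    (rec : ∀ y : OType, y < x → Set (List ℕ)) : Set (List ℕ) :=
  Sum.elim
    (fun g : Finset (List ℕ) → ℕ∞ =>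
      pickPhi (fun A => ⨆ (F : Finset (List ℕ)) (_ : ↑F ⊆ A), g F) (priorSets x rec))
    (fun X : Set (List ℕ) =>
      if X.Infinite ∧ (∀ f : ℕ → ℕ, (X ∩ branchSet f).Finite) ∧
          (∀ A ∈ priorSets x rec, (X ∩ A).Finite)
      then X else defaultSet)
    (e.symm x)

noncomputable def famB (e : Code ≃ OType) : OType → Set (List ℕ) :=
  IsWellFounded.fix (· < ·) (step e)

lemma famB_eq (e : Code ≃ OType) (x : OType) :
    famB e x = step e x (fun y _ => famB e y) :=
  IsWellFounded.fix_eq _ (step e) x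

open Classical in
lemma famB_prop (e : Code ≃ OType) (x : OType) :
    famB e x = defaultSet ∨ ((famB e x).Infinite ∧ (∀ f, (famB e x ∩ branchSet f).Finite) ∧
      ∀ y : OType, y < x → (famB e x ∩ famB e y).Finite) := by
  rw [famB_eq]
  unfold step
  rcases hc : e.symm x with g | X
  · set φ' : Set (List ℕ) → ℕ∞ := fun A => ⨆ (F : Finset (List ℕ)) (_ : ↑F ⊆ A), g F with hφ'
    by_cases h : IsLSC φ' ∧ φ' Set.univ = ⊤ ∧ (∀ s : List ℕ, φ' {s} ≠ ⊤) ∧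
        (∀ f : ℕ → ℕ, φ' (branchSet f) ≠ ⊤) ∧
        (priorSets x (fun y _ => famB e y)).Countable ∧
        (∀ A ∈ priorSets x (fun y _ => famB e y), φ' A ≠ ⊤)
    · rw [Sum.elim_inl]
      obtain ⟨h1, h2, h3, h4⟩ := pickPhi_spec h
      exact Or.inr ⟨h1, h3, fun y hy => h4 _ ⟨y, hy, rfl⟩⟩
    · rw [Sum.elim_inl, pickPhi, dif_neg h]
      exact Or.inl rfl
  · by_cases h : X.Infinite ∧ (∀ f : ℕ → ℕ, (X ∩ branchSet f).Finite) ∧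
        (∀ A ∈ priorSets x (fun y _ => famB e y), (X ∩ A).Finite)
    · rw [Sum.elim_inr, if_pos h]
      exact Or.inr ⟨h.1, h.2.1, fun y hy => h.2.2 _ ⟨y, hy, rfl⟩⟩
    · rw [Sum.elim_inr, if_neg h]
      exact Or.inl rfl

/-! ### Positivity of cones and the assembly -/

def IsADF' (𝒜 : Set (Set (List ℕ))) : Prop :=
  (∀ A ∈ 𝒜, A.Infinite) ∧ ∀ A ∈ 𝒜, ∀ B ∈ 𝒜, A ≠ B → (A ∩ B).Finite

def InIdeal' (𝒜 : Set (Set (List ℕ))) (X : Set (List ℕ)) : Prop :=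
  ∃ F : Finset (Set (List ℕ)), ↑F ⊆ 𝒜 ∧ (X \ ⋃ A ∈ F, A).Finite

lemma cone_positive {𝒜 : Set (Set (List ℕ))} (had : IsADF' 𝒜)
    (hbr : ∀ f : ℕ → ℕ, branchSet f ∈ 𝒜)
    (b : List ℕ) {S : Set (List ℕ)} (hS : {t | b <+: t ∧ t ≠ b} ⊆ S) :
    ¬ InIdeal' 𝒜 S := by
  classical
  rintro ⟨F, hF𝒜, hFfin⟩
  set fs : ℕ → ℕ → ℕ := fun c k => if h : k < b.length then b[k] else c with hfs
  have hbpre : ∀ c, (List.range b.length).map (fs c) = b := by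
    intro c
    apply List.ext_getElem (by simp)
    intro k hk1 hk2
    simp only [List.getElem_map, List.getElem_range, hfs]
    rw [dif_pos hk2]
  have hinj : Function.Injective fun c => branchSet (fs c) := by
    intro c d h
    have h1 : fs c = fs d := branchSet_injective h
    have h2 := congrFun h1 b.length
    rw [hfs] at h2
    simpa using h2
  have hex : ∃ c : ℕ, branchSet (fs c) ∉ (F : Set (Set (List ℕ))) := by
    by_contra hcon
    push_neg at hcon
    exact (Set.infinite_of_injective_forall_mem hinj hcon) F.finite_toSet
  obtain ⟨c, hc⟩ := hex
  set Yc : Set (List ℕ) := {l | ∃ n, b.length < n ∧ l = (List.range n).map (fs c)} with hYc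
  have hYinf : Yc.Infinite := by
    apply Set.infinite_of_injective_forall_mem
      (f := fun m : ℕ => (List.range (b.length + 1 + m)).map (fs c))
    · intro u v huv
      have := map_range_injective (fs c) huv
      omega
    · exact fun m => ⟨b.length + 1 + m, by omega, rfl⟩
  have hsub1 : Yc ⊆ {t | b <+: t ∧ t ≠ b} := by
    rintro l ⟨n, hn, rfl⟩
    constructor
    · conv_lhs => rw [← hbpre c]
      exact prefix_map_range (by omega)
    · intro he
      have := congrArg List.length he
      simp at this
      omega
  have hbrYc : Yc ⊆ branchSet (fs c) := by
    rintro l ⟨n, _, rfl⟩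
    exact ⟨n, rfl⟩
  have hcover : Yc ⊆ (S \ ⋃ A ∈ F, A) ∪ ⋃ A ∈ F, (branchSet (fs c) ∩ A) := by
    intro l hl
    by_cases hmem : l ∈ ⋃ A ∈ F, A
    · obtain ⟨A, hA, hlA⟩ := Set.mem_iUnion₂.mp hmem
      exact Or.inr (Set.mem_biUnion hA ⟨hbrYc hl, hlA⟩)
    · exact Or.inl ⟨hS (hsub1 hl), hmem⟩
  have hfin : ((S \ ⋃ A ∈ F, A) ∪ ⋃ A ∈ F, (branchSet (fs c) ∩ A)).Finite := by
    apply Set.Finite.union hFfin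
    apply Set.Finite.biUnion F.finite_toSet
    intro A hA
    exact had.2 _ (hbr (fs c)) _ (hF𝒜 hA) (fun he => hc (he ▸ hA))
  exact hYinf (hfin.subset hcover)

lemma famB_at_inl (e : Code ≃ OType) (g : Finset (List ℕ) → ℕ∞) :
    famB e (e (Sum.inl g)) =
      pickPhi (fun A => ⨆ (F : Finset (List ℕ)) (_ : ↑F ⊆ A), g F)
        (priorSets (e (Sum.inl g)) (fun y _ => famB e y)) := by
  rw [famB_eq]
  unfold step
  rw [show e.symm (e (Sum.inl g)) = Sum.inl g from e.symm_apply_apply _, Sum.elim_inl]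

end Aux

/-- (CH) There is a MAD family on `ω^{<ω}` containing all branch-sets which is
Laflamme but not `+`-Ramsey. -/
theorem stmt16 (hCH : Cardinal.continuum = Cardinal.aleph 1) :
    ∃ 𝒜 : Set (Set (List ℕ)), IsMAD 𝒜 ∧ (∀ f : ℕ → ℕ, branchSet f ∈ 𝒜) ∧
      Laflamme 𝒜 ∧ ¬ PlusRamsey 𝒜 := by
  classical
  have hCH0 : Cardinal.continuum.{0} = Cardinal.aleph.{0} 1 := by
    apply Cardinal.lift_eq_aleph_one.mp
    rw [Cardinal.lift_continuum]
    exact hCH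
  obtain ⟨e⟩ := Aux.exists_equiv hCH0
  set 𝒜 : Set (Set (List ℕ)) := Set.range branchSet ∪ Set.range (Aux.famB e) with h𝒜
  have hbr𝒜 : ∀ f : ℕ → ℕ, branchSet f ∈ 𝒜 := fun f => Or.inl ⟨f, rfl⟩
  have hBbr : ∀ (x : Aux.OType) (f : ℕ → ℕ), Aux.famB e x ≠ branchSet f →
      (Aux.famB e x ∩ branchSet f).Finite := by
    intro x f hne
    rcases Aux.famB_prop e x with h | h
    · rw [h] at hne ⊢
      have hne' : (fun _ : ℕ => 0) ≠ f := fun he => hne (by unfold Aux.defaultSet; rw [he])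
      exact Aux.branchSet_inter_finite hne'
    · exact h.2.1 f
  have hADF : IsADF 𝒜 := by
    constructor
    · rintro A (⟨f, rfl⟩ | ⟨x, rfl⟩)
      · exact Aux.branchSet_infinite f
      · rcases Aux.famB_prop e x with h | h
        · rw [h]; exact Aux.branchSet_infinite _
        · exact h.1
    · rintro A hA B hB hne
      rcases hA with ⟨f, rfl⟩ | ⟨x, rfl⟩ <;> rcases hB with ⟨g, rfl⟩ | ⟨y, rfl⟩
      · exact Aux.branchSet_inter_finite (fun he => hne (by rw [he]))
      · rw [Set.inter_comm]; exact hBbr y f (fun he => hne he.symm)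
      · exact hBbr x g hne
      · rcases lt_trichotomy x y with hxy | hxy | hxy
        · rcases Aux.famB_prop e y with h | h
          · rw [h] at hne ⊢
            exact hBbr x _ hne
          · rw [Set.inter_comm]; exact h.2.2 x hxy
        · exact absurd (by rw [hxy]) hne
        · rcases Aux.famB_prop e x with h | h
          · rw [h] at hne ⊢
            rw [Set.inter_comm]
            exact hBbr y _ (fun he => hne he.symm)
          · exact h.2.2 y hxy
  have hMAD : IsMAD 𝒜 := by
    refine ⟨hADF, ?_⟩
    intro X hX
    by_cases hfin : (∀ f : ℕ → ℕ, (X ∩ branchSet f).Finite) ∧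
        (∀ A ∈ Aux.priorSets (e (Sum.inr X)) (fun y _ => Aux.famB e y), (X ∩ A).Finite)
    · refine ⟨X, Or.inr ⟨e (Sum.inr X), ?_⟩, by rw [Set.inter_self]; exact hX⟩
      rw [Aux.famB_eq]
      unfold Aux.step
      rw [show e.symm (e (Sum.inr X)) = Sum.inr X from e.symm_apply_apply _, Sum.elim_inr, if_pos ⟨hX, hfin.1, hfin.2⟩]
    · rcases not_and_or.mp hfin with h | h
      · push_neg at h
        obtain ⟨f, hf⟩ := h
        exact ⟨branchSet f, hbr𝒜 f, hf⟩
      · push_neg at h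
        obtain ⟨A, hA, hfA⟩ := h
        obtain ⟨y, hy, rfl⟩ := hA
        exact ⟨Aux.famB e y, Or.inr ⟨y, rfl⟩, hfA⟩
  have hLaf : Laflamme 𝒜 := by
    rintro ⟨φ, hlsc, htop, hsing, hAll⟩
    have hfeq : (fun A : Set (List ℕ) =>
        ⨆ (F : Finset (List ℕ)) (_ : ↑F ⊆ A), (fun F : Finset (List ℕ) => φ ↑F) F) = φ :=
      funext fun A => (hlsc.2.2.2 A).symm
    have hBx : Aux.famB e (e (Sum.inl (fun F : Finset (List ℕ) => φ ↑F))) =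
        Aux.pickPhi φ (Aux.priorSets (e (Sum.inl (fun F : Finset (List ℕ) => φ ↑F)))
          (fun y _ => Aux.famB e y)) :=
      (Aux.famB_at_inl e (fun F : Finset (List ℕ) => φ ↑F)).trans
        (congrArg (fun ψ => Aux.pickPhi ψ
          (Aux.priorSets (e (Sum.inl (fun F : Finset (List ℕ) => φ ↑F)))
            (fun y _ => Aux.famB e y))) hfeq)
    have hcond : IsLSC φ ∧ φ Set.univ = ⊤ ∧ (∀ s : List ℕ, φ {s} ≠ ⊤) ∧
        (∀ f : ℕ → ℕ, φ (branchSet f) ≠ ⊤) ∧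
        (Aux.priorSets (e (Sum.inl (fun F : Finset (List ℕ) => φ ↑F)))
          (fun y _ => Aux.famB e y)).Countable ∧
        (∀ A ∈ Aux.priorSets (e (Sum.inl (fun F : Finset (List ℕ) => φ ↑F)))
          (fun y _ => Aux.famB e y), φ A ≠ ⊤) := by
      refine ⟨hlsc, htop, hsing, fun f => hAll _ (hbr𝒜 f), Aux.priorSets_countable _ _, ?_⟩
      rintro A ⟨y, hy, rfl⟩
      exact hAll _ (Or.inr ⟨y, rfl⟩)
    have htop' := (Aux.pickPhi_spec hcond).2.1
    rw [← hBx] at htop'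
    exact hAll _ (Or.inr ⟨_, rfl⟩) htop'
  have hnPR : ¬ PlusRamsey 𝒜 := by
    intro hPR
    set T : Set (List (List ℕ)) := {σ | σ.IsChain (fun a b => a <+: b ∧ a ≠ b)} with hT
    have hT0 : [] ∈ T := by
      show List.IsChain (fun a b : List ℕ => a <+: b ∧ a ≠ b) []
      exact List.isChain_nil
    have htree : IsTree T := by
      intro s hs t ht
      have hs' : List.IsChain (fun a b : List ℕ => a <+: b ∧ a ≠ b) s := hs
      show List.IsChain (fun a b : List ℕ => a <+: b ∧ a ≠ b) t
      exact hs'.prefix ht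
    have hpos : ∀ s ∈ T, Positive 𝒜 (sucT T s) := by
      intro σ hσ
      have := Aux.cone_positive ⟨hADF.1, hADF.2⟩ hbr𝒜 (σ.getLastD [])
        (S := sucT T σ) ?_
      · exact this
      rintro t ⟨h1, h2⟩
      show σ ++ [t] ∈ T
      rw [hT, Set.mem_setOf_eq, List.isChain_append]
      refine ⟨hσ, List.isChain_singleton t, ?_⟩
      intro x hx y hy
      have hxb : x = σ.getLastD [] := by
        rw [List.getLastD_eq_getLast?, Option.mem_def.mp hx]
        rfl
      obtain rfl : t = y := by simpa using hy
      rw [hxb]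
      exact ⟨h1, fun hh => h2 hh.symm⟩
    obtain ⟨f, hf1, hf2⟩ := hPR T hT0 htree hpos
    have hmono : ∀ n, f n <+: f (n+1) ∧ f n ≠ f (n+1) := by
      intro n
      have h := hf1 (n+2)
      rw [hT, Set.mem_setOf_eq, List.isChain_map, List.isChain_range_succ] at h
      exact h n (by omega)
    obtain ⟨g, hg⟩ := Aux.limit_lemma hmono
    apply hf2
    refine ⟨{branchSet g}, ?_, ?_⟩
    · intro A hA
      have : A = branchSet g := by simpa using hA
      rw [this]
      exact hbr𝒜 g
    · have hsub : Set.range f ⊆ ⋃ A ∈ ({branchSet g} : Finset (Set (List ℕ))), A := by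
        rintro _ ⟨i, rfl⟩
        exact Set.mem_biUnion (Finset.mem_singleton_self _) ⟨(f i).length, hg i⟩
      rw [Set.diff_eq_empty.mpr hsub]
      exact Set.finite_empty
  exact ⟨𝒜, hMAD, hbr𝒜, hLaf, hnPR⟩
end
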